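/- If Y is a 4×4 correlation matrix constructed via the substitution of Theorem 5.1 from parameters ρ_{12}, ρ_{23}, ρ_{34}, ρ_{13|2}, ρ_{24|3}, ρ_{14|23} ∈ (−1,1), then det(Y) = (1−ρ_{12}²)(1−ρ_{23}²)(1−ρ_{34}²)(1−ρ_{13|2}²)(1−ρ_{24|3}²)(1−ρ_{14|23}²). -/

import Mathlib

set_option maxHeartbeats 1600000


/-- Let `Y` be the 4×4 correlation matrix obtained from
parameters `ρ₁₂, ρ₂₃, ρ₃₄, ρ₁₃|₂, ρ₂₄|₃, ρ₁₄|₂₃ ∈ (−1,1)` via the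
substitution of Theorem 5.1: the unit-diagonal symmetric matrix with
`y₁₂=ρ₁₂`, `y₂₃=ρ₂₃`, `y₃₄=ρ₃₄`,
`y₁₃ = ρ₁₂ρ₂₃ − ρ₁₃|₂·√((1−ρ₁₂²)(1−ρ₂₃²))`,
`y₂₄ = ρ₂₃ρ₃₄ − ρ₂₄|₃·√((1−ρ₂₃²)(1−ρ₃₄²))`, and `y₁₄` given by the five-term
Catalan path formula with `p₂ = p₃ = 1`, `p₂₃ = −(1−ρ₂₃²)`,
`a₁₂ = ρ₁₂`, `a₂₃ = ρ₂₃`, `a₃₄ = ρ₃₄`, `a₁₃|₂ = −ρ₁₃|₂√(p₁₂p₂₃)`,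
`a₂₄|₃ = −ρ₂₄|₃√(p₂₃p₃₄)`, `a₁₄|₂₃ = −ρ₁₄|₂₃√(p₁₂₃p₂₃₄)`, where
`p₁₂ = −(1−ρ₁₂²)`, `p₃₄ = −(1−ρ₃₄²)`,
`p₁₂₃ = −(1−ρ₁₂²)(1−ρ₂₃²)(1−ρ₁₃|₂²)`,
`p₂₃₄ = −(1−ρ₂₃²)(1−ρ₃₄²)(1−ρ₂₄|₃²)`.  Then
`det Y = (1−ρ₁₂²)(1−ρ₂₃²)(1−ρ₃₄²)(1−ρ₁₃|₂²)(1−ρ₂₄|₃²)(1−ρ₁₄|₂₃²)`. -/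
theorem stmt19 (ρ12 ρ23 ρ34 ρ132 ρ243 ρ1423 : ℝ)
    (h12 : ρ12 ∈ Set.Ioo (-1 : ℝ) 1) (h23 : ρ23 ∈ Set.Ioo (-1 : ℝ) 1)
    (h34 : ρ34 ∈ Set.Ioo (-1 : ℝ) 1) (h132 : ρ132 ∈ Set.Ioo (-1 : ℝ) 1)
    (h243 : ρ243 ∈ Set.Ioo (-1 : ℝ) 1) (h1423 : ρ1423 ∈ Set.Ioo (-1 : ℝ) 1)
    (p12 p23 p34 p123 p234 a132 a243 a1423 y13 y24 y14 : ℝ)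
    (hp12 : p12 = -(1 - ρ12 ^ 2))
    (hp23 : p23 = -(1 - ρ23 ^ 2))
    (hp34 : p34 = -(1 - ρ34 ^ 2))
    (hp123 : p123 = -((1 - ρ12 ^ 2) * (1 - ρ23 ^ 2) * (1 - ρ132 ^ 2)))
    (hp234 : p234 = -((1 - ρ23 ^ 2) * (1 - ρ34 ^ 2) * (1 - ρ243 ^ 2)))
    (ha132 : a132 = -ρ132 * Real.sqrt (p12 * p23))
    (ha243 : a243 = -ρ243 * Real.sqrt (p23 * p34))
    (ha1423 : a1423 = -ρ1423 * Real.sqrt (p123 * p234))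
    (hy13 : y13 = ρ12 * ρ23 + a132 / (1 * 1))
    (hy24 : y24 = ρ23 * ρ34 + a243 / (1 * 1))
    (hy14 : y14 = a1423 / p23 + ρ12 * a243 / (1 * 1) + a132 * ρ34 / (1 * 1) +
      ρ12 * ρ23 * ρ34 / (1 * 1) + a132 * ρ23 * a243 / (1 * p23 * 1)) :
    (!![1, ρ12, y13, y14;
        ρ12, 1, ρ23, y24;
        y13, ρ23, 1, ρ34;
        y14, y24, ρ34, 1] : Matrix (Fin 4) (Fin 4) ℝ).det =
      (1 - ρ12 ^ 2) * (1 - ρ23 ^ 2) * (1 - ρ34 ^ 2) *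
      (1 - ρ132 ^ 2) * (1 - ρ243 ^ 2) * (1 - ρ1423 ^ 2) := by

  obtain ⟨ha1, ha2⟩ := h12
  obtain ⟨hb1, hb2⟩ := h23
  obtain ⟨hc1, hc2⟩ := h34
  obtain ⟨hd1, hd2⟩ := h132
  obtain ⟨he1, he2⟩ := h243
  have q12 : (0:ℝ) < 1 - ρ12 ^ 2 := by
    have h : (0:ℝ) < (1 - ρ12) * (1 + ρ12) := mul_pos (by linarith only [ha2]) (by linarith only [ha1])
    nlinarith only [h]
  have q23 : (0:ℝ) < 1 - ρ23 ^ 2 := by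
    have h : (0:ℝ) < (1 - ρ23) * (1 + ρ23) := mul_pos (by linarith only [hb2]) (by linarith only [hb1])
    nlinarith only [h]
  have q34 : (0:ℝ) < 1 - ρ34 ^ 2 := by
    have h : (0:ℝ) < (1 - ρ34) * (1 + ρ34) := mul_pos (by linarith only [hc2]) (by linarith only [hc1])
    nlinarith only [h]
  have q132 : (0:ℝ) < 1 - ρ132 ^ 2 := by
    have h : (0:ℝ) < (1 - ρ132) * (1 + ρ132) := mul_pos (by linarith only [hd2]) (by linarith only [hd1])
    nlinarith only [h]
  have q243 : (0:ℝ) < 1 - ρ243 ^ 2 := by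
    have h : (0:ℝ) < (1 - ρ243) * (1 + ρ243) := mul_pos (by linarith only [he2]) (by linarith only [he1])
    nlinarith only [h]
  obtain ⟨u, hu0, hu⟩ : ∃ u : ℝ, 0 ≤ u ∧ u ^ 2 = 1 - ρ12 ^ 2 :=
    ⟨Real.sqrt _, Real.sqrt_nonneg _, Real.sq_sqrt q12.le⟩
  obtain ⟨v, hv0, hv⟩ : ∃ v : ℝ, 0 ≤ v ∧ v ^ 2 = 1 - ρ23 ^ 2 :=
    ⟨Real.sqrt _, Real.sqrt_nonneg _, Real.sq_sqrt q23.le⟩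
  obtain ⟨w, hw0, hw⟩ : ∃ w : ℝ, 0 ≤ w ∧ w ^ 2 = 1 - ρ34 ^ 2 :=
    ⟨Real.sqrt _, Real.sqrt_nonneg _, Real.sq_sqrt q34.le⟩
  obtain ⟨s, hs0, hs⟩ : ∃ s : ℝ, 0 ≤ s ∧ s ^ 2 = 1 - ρ132 ^ 2 :=
    ⟨Real.sqrt _, Real.sqrt_nonneg _, Real.sq_sqrt q132.le⟩
  obtain ⟨t, ht0, ht⟩ : ∃ t : ℝ, 0 ≤ t ∧ t ^ 2 = 1 - ρ243 ^ 2 :=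
    ⟨Real.sqrt _, Real.sqrt_nonneg _, Real.sq_sqrt q243.le⟩
  have hvne : v ≠ 0 := fun h => by rw [h] at hv; nlinarith
  have hr12 : Real.sqrt (p12 * p23) = u * v := by
    have h : p12 * p23 = (u * v) ^ 2 := by rw [hp12, hp23, ← hu, ← hv]; ring
    rw [h, Real.sqrt_sq (mul_nonneg hu0 hv0)]
  have hr23 : Real.sqrt (p23 * p34) = v * w := by
    have h : p23 * p34 = (v * w) ^ 2 := by rw [hp23, hp34, ← hv, ← hw]; ring
    rw [h, Real.sqrt_sq (mul_nonneg hv0 hw0)]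
  have hr14 : Real.sqrt (p123 * p234) = u * v ^ 2 * w * s * t := by
    have h : p123 * p234 = (u * v ^ 2 * w * s * t) ^ 2 := by
      rw [hp123, hp234, ← hu, ← hv, ← hw, ← hs, ← ht]; ring
    rw [h, Real.sqrt_sq (by positivity)]
  have hy13' : y13 = ρ12 * ρ23 - ρ132 * (u * v) := by
    rw [hy13, ha132, hr12]; ring
  have hy24' : y24 = ρ23 * ρ34 - ρ243 * (v * w) := by
    rw [hy24, ha243, hr23]; ring
  have hy14' : y14 = ρ1423 * (u * w * s * t) - ρ12 * ρ243 * (v * w)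
      - ρ132 * ρ34 * (u * v) + ρ12 * ρ23 * ρ34 - ρ132 * ρ23 * ρ243 * (u * w) := by
    rw [hy14, ha1423, hr14, ha243, hr23, ha132, hr12, hp23, ← hv]
    field_simp
    ring
  rw [hy13', hy24', hy14']
  simp [Matrix.det_succ_row_zero, Fin.sum_univ_succ, Fin.succAbove,
    Matrix.submatrix_apply, show (Fin.castSucc 2 : Fin 4) = 2 from rfl]
  linear_combination ((-1)*ρ1423^2*w^2*s^2*t^2 + (-1)*ρ132^2*v^2 + ρ132^2*ρ243^2*v^4*w^2 + ρ34^2*ρ132^2*v^2 + (2)*ρ23*ρ132*ρ243*ρ1423*w^2*s*t + (-2)*ρ23*ρ132*ρ243*ρ1423*v^2*w^2*s*t + ρ23^2*ρ1423^2*w^2*s^2*t^2 + (-1)*ρ23^2*ρ132^2*ρ243^2*w^2 + (2)*ρ23^2*ρ132^2*ρ243^2*v^2*w^2 + (-2)*ρ23^3*ρ132*ρ243*ρ1423*w^2*s*t + ρ23^4*ρ132^2*ρ243^2*w^2) * hu + ((-1)*ρ243^2*w^2 + (-1)*ρ132^2 + ρ132^2*ρ243^2 + ρ132^2*ρ243^2*v^2*w^2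 + ρ34^2*ρ132^2 + (-1)*ρ34^2*ρ132^2*ρ243^2 + (-2)*ρ23*ρ132*ρ243*ρ1423*w^2*s*t + ρ23^2*ρ132^2*ρ243^2*w^2 + ρ12^2*ρ243^2*w^2 + ρ12^2*ρ132^2 + (-1)*ρ12^2*ρ132^2*ρ243^2 + (-1)*ρ12^2*ρ132^2*ρ243^2*v^2*w^2 + (-1)*ρ12^2*ρ34^2*ρ132^2 + ρ12^2*ρ34^2*ρ132^2*ρ243^2 + (2)*ρ12^2*ρ23*ρ132*ρ243*ρ1423*w^2*s*t + (-1)*ρ12^2*ρ23^2*ρ132^2*ρ243^2*w^2) * hv + ((-1)*ρ1423^2*s^2*t^2 + (-1)*ρ243^2 + ρ132^2*ρ243^2*v^2 + ρ23^2*ρ1423^2*s^2*t^2 + ρ23^2*ρ243^2 + ρ12^2*ρ1423^2*s^2*t^2 + ρ12^2*ρ243^2 + (-1)*ρ12^2*ρ132^2*ρ243^2*v^2 + (-1)*ρ12^2*ρ23^2*ρ1423^2*s^2*t^2 + (-1)*ρ12^2*ρ23^2*ρ243^2) * hw + ((-1)*ρ1423^2*t^2 + ρ34^2*ρ1423^2*t^2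 + ρ23^2*ρ1423^2*t^2 + (-1)*ρ23^2*ρ34^2*ρ1423^2*t^2 + ρ12^2*ρ1423^2*t^2 + (-1)*ρ12^2*ρ34^2*ρ1423^2*t^2 + (-1)*ρ12^2*ρ23^2*ρ1423^2*t^2 + ρ12^2*ρ23^2*ρ34^2*ρ1423^2*t^2) * hs + ((-1)*ρ1423^2 + ρ132^2*ρ1423^2 + ρ34^2*ρ1423^2 + (-1)*ρ34^2*ρ132^2*ρ1423^2 + ρ23^2*ρ1423^2 + (-1)*ρ23^2*ρ132^2*ρ1423^2 + (-1)*ρ23^2*ρ34^2*ρ1423^2 + ρ23^2*ρ34^2*ρ132^2*ρ1423^2 + ρ12^2*ρ1423^2 + (-1)*ρ12^2*ρ132^2*ρ1423^2 + (-1)*ρ12^2*ρ34^2*ρ1423^2 + ρ12^2*ρ34^2*ρ132^2*ρ1423^2 + (-1)*ρ12^2*ρ23^2*ρ1423^2 + ρ12^2*ρ23^2*ρ132^2*ρ1423^2 + ρ12^2*ρ23^2*ρ34^2*ρ1423^2 + (-1)*ρ12^2*ρ23^2*ρ34^2*ρ132^2*ρ1423^2) * ht
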